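/- The cokernel ℤ^(X₁×⋯×X_k)/Ψ(ℤ^(X₁⊔⋯⊔X_k)) is a free abelian group of rank |X₁|⋯|X_k| − |X₁| − ⋯ − |X_k| + k − 1, freely generated by the images of those basis elements δ_{(t₁,…,t_k)} such that tᵢ ≠ xᵢ⁰ and tⱼ ≠ xⱼ⁰ for at least two distinct indices i, j ∈ {1,…,k}. -/

import Mathlib

-- The canonical basis element `δ_q` of the free abelian group of functions.
open Classical in
noncomputable def deltaFn {α : Type} (q : α) : α → ℤ := fun p => if p = q then 1 else 0

/-- The map `Ψ : ℤ^(X₁⊔⋯⊔X_k) → ℤ^(X₁×⋯×X_k)` determined by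
`Ψ(δ_x) = Σ_{t : tᵢ = x} δ_t` for `x ∈ Xᵢ`. -/
noncomputable def Psi {k : ℕ} (X : Fin k → Type) [∀ i, Fintype (X i)] :
    ((Σ i, X i) → ℤ) →ₗ[ℤ] ((∀ i, X i) → ℤ) where
  toFun f := fun t => ∑ i, f ⟨i, t i⟩
  map_add' f g := by funext t; simp [Finset.sum_add_distrib]
  map_smul' c f := by funext t; simp [smul_eq_mul, Finset.mul_sum]

open Classical Finset

set_option linter.unusedSectionVars false

section Aux
variable {k : ℕ} {X : Fin k → Type} [∀ i, Fintype (X i)] (x0 : ∀ i, X i)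

noncomputable def dd (t : ∀ i, X i) : ℕ := (univ.filter fun i => t i ≠ x0 i).card

lemma ncard_eq (t : ∀ i, X i) : Nat.card {i : Fin k // t i ≠ x0 i} = dd x0 t := by
  simp [Nat.card_eq_fintype_card, Fintype.card_subtype, dd]

lemma dd_eq_zero_iff (t : ∀ i, X i) : dd x0 t = 0 ↔ t = x0 := by
  simp only [dd, Finset.card_eq_zero, Finset.filter_eq_empty_iff]
  constructor
  · intro h; funext i; simpa using h (Finset.mem_univ i)
  · intro h i _; simp [h]

lemma update_ne_iff {j : Fin k} {y : X j} (hy : y ≠ x0 j) (j' : Fin k) :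
    Function.update x0 j y j' ≠ x0 j' ↔ j' = j := by
  rcases eq_or_ne j' j with rfl | h
  · simpa using hy
  · simp [Function.update_of_ne h, h]

lemma dd_update {j : Fin k} {y : X j} (hy : y ≠ x0 j) :
    dd x0 (Function.update x0 j y) = 1 := by
  have : (univ.filter fun j' => Function.update x0 j y j' ≠ x0 j') = {j} := by
    ext j'; simp [update_ne_iff x0 hy]
  simp [dd, this]

lemma two_le_dd {t : ∀ i, X i} {i j : Fin k} (hij : i ≠ j) (hi : t i ≠ x0 i)
    (hj : t j ≠ x0 j) : 2 ≤ dd x0 t := by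
  have hsub : ({i, j} : Finset (Fin k)) ⊆ univ.filter fun i' => t i' ≠ x0 i' := by
    intro a ha
    simp only [Finset.mem_insert, Finset.mem_singleton] at ha
    rcases ha with rfl | rfl <;> simp [hi, hj]
  have := Finset.card_le_card hsub
  rwa [Finset.card_pair hij] at this

lemma dd_one_reindex {M : Type*} [AddCommMonoid M] (g : (∀ i, X i) → M) :
    ∑ t ∈ univ.filter (fun t => dd x0 t = 1), g t
      = ∑ j, ∑ y ∈ univ.filter (· ≠ x0 j), g (Function.update x0 j y) := by
  rw [Finset.sum_sigma']
  refine (Finset.sum_bij (fun p _ => Function.update x0 p.1 p.2) ?_ ?_ ?_ ?_).symm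
  · rintro ⟨j, y⟩ hp
    simp only [Finset.mem_sigma, Finset.mem_filter, Finset.mem_univ, true_and] at hp ⊢
    exact dd_update x0 hp
  · rintro ⟨j, y⟩ hj ⟨j', y'⟩ hj' h
    simp only [Finset.mem_sigma, Finset.mem_filter, Finset.mem_univ, true_and] at hj hj'
    dsimp only at h
    have hjj : j = j' := by
      by_contra hne
      have := congrFun h j
      rw [Function.update_self] at this
      rw [show Function.update x0 j' y' j = x0 j from
        Function.update_of_ne (fun e => hne e) _ _] at this
      exact hj this
    subst hjj
    have := congrFun h j
    rw [Function.update_self, Function.update_self] at this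
    subst this; rfl
  · intro t ht
    simp only [Finset.mem_filter, Finset.mem_univ, true_and] at ht
    obtain ⟨j, hj⟩ := Finset.card_eq_one.mp ht
    have hjmem : j ∈ univ.filter fun i => t i ≠ x0 i := by rw [hj]; simp
    have htj : t j ≠ x0 j := by simpa using hjmem
    refine ⟨⟨j, t j⟩, by simp [htj], ?_⟩
    dsimp only
    funext j'
    rcases eq_or_ne j' j with rfl | h
    · simp
    · rw [Function.update_of_ne h]
      by_contra hne
      have : j' ∈ univ.filter fun i => t i ≠ x0 i := by
        simp only [Finset.mem_filter, Finset.mem_univ, true_and]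
        exact fun e => hne e.symm
      rw [hj] at this
      exact h (Finset.mem_singleton.mp this)
  · intros; rfl

noncomputable def cMat (t s : ∀ i, X i) : ℤ :=
  if 2 ≤ dd x0 t then (if s = t then 1 else 0)
  else if dd x0 t = 1 then -((univ.filter fun j => t j ≠ x0 j ∧ s j = t j).card : ℤ)
  else (dd x0 s : ℤ) - 1

lemma count_update {j : Fin k} {y : X j} (hy : y ≠ x0 j) (s : ∀ i, X i) :
    ((univ.filter fun j' => Function.update x0 j y j' ≠ x0 j' ∧ s j' = Function.update x0 j y j').card : ℤ)
      = if s j = y then 1 else 0 := by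
  have : (univ.filter fun j' => Function.update x0 j y j' ≠ x0 j' ∧ s j' = Function.update x0 j y j')
      = if s j = y then {j} else ∅ := by
    split_ifs with h
    · ext j'
      simp only [Finset.mem_filter, Finset.mem_univ, true_and, Finset.mem_singleton,
        update_ne_iff x0 hy]
      constructor
      · rintro ⟨h1, _⟩; exact h1
      · rintro rfl; simp [h]
    · ext j'
      simp only [Finset.mem_filter, Finset.mem_univ, true_and, Finset.notMem_empty, iff_false,
        update_ne_iff x0 hy, not_and]
      rintro rfl; simpa [h] using fun e => h e
  rw [this]; split_ifs <;> simp

lemma core (s : ∀ i, X i) (hs : 2 ≤ dd x0 s) (i : Fin k) (x : X i) :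
    ∑ t, (if t i = x then (1:ℤ) else 0) * cMat x0 t s = 0 := by
  classical
  set f : (∀ i, X i) → ℤ := fun t => (if t i = x then (1:ℤ) else 0) * cMat x0 t s with hf
  rw [← Finset.sum_filter_add_sum_filter_not univ (fun t => 2 ≤ dd x0 t) f]
  -- first sum
  have h1 : ∑ t ∈ univ.filter (fun t => 2 ≤ dd x0 t), f t = (if s i = x then (1:ℤ) else 0) := by
    rw [Finset.sum_congr rfl (fun t ht => ?_)]
    case _ =>
      calc ∑ t ∈ univ.filter (fun t => 2 ≤ dd x0 t), (if s = t then (if t i = x then (1:ℤ) else 0) else 0)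
          = if s ∈ univ.filter (fun t => 2 ≤ dd x0 t) then (if s i = x then (1:ℤ) else 0) else 0 :=
            Finset.sum_ite_eq _ s _
        _ = _ := by rw [if_pos (by simp [hs])]
    case _ =>
      simp only [Finset.mem_filter, Finset.mem_univ, true_and] at ht
      rw [hf]
      simp only [cMat, if_pos ht]
      rcases eq_or_ne s t with rfl | h
      · simp
      · simp [h]
  rw [h1]
  -- split the remainder
  have hsplit : (univ.filter fun t => ¬ 2 ≤ dd x0 t)
      = (univ.filter fun t => dd x0 t = 1) ∪ {x0} := by
    ext t
    simp only [Finset.mem_filter, Finset.mem_univ, true_and, Finset.mem_union,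
      Finset.mem_singleton, ← dd_eq_zero_iff x0 t]
    omega
  have hdisj : Disjoint (univ.filter fun t => dd x0 t = 1) ({x0} : Finset _) := by
    simp only [Finset.disjoint_singleton_right, Finset.mem_filter]
    have : dd x0 x0 = 0 := (dd_eq_zero_iff x0 x0).mpr rfl
    omega
  rw [hsplit, Finset.sum_union hdisj, Finset.sum_singleton]
  -- the x0 term
  have hx0 : f x0 = (if x0 i = x then (1:ℤ) else 0) * ((dd x0 s : ℤ) - 1) := by
    have h0 : dd x0 x0 = 0 := (dd_eq_zero_iff x0 x0).mpr rfl
    rw [hf]; simp only [cMat, h0]; norm_num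
  rw [hx0]
  -- the dd = 1 sum, reindexed
  rw [dd_one_reindex x0 f]
  have hterm : ∀ (j : Fin k) (y : X j), y ≠ x0 j →
      f (Function.update x0 j y)
        = (if Function.update x0 j y i = x then (1:ℤ) else 0) * (-(if s j = y then 1 else 0)) := by
    intro j y hy
    rw [hf]
    congr 1
    have h1 : dd x0 (Function.update x0 j y) = 1 := by
      have : (univ.filter fun j' => Function.update x0 j y j' ≠ x0 j') = {j} := by
        ext j'; simp [update_ne_iff x0 hy]
      simp [dd, this]
    simp only [cMat, h1]
    norm_num
    rw [count_update x0 hy s]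
    split_ifs <;> simp
  have hinner : ∀ j : Fin k, ∑ y ∈ univ.filter (· ≠ x0 j), f (Function.update x0 j y)
      = ∑ y ∈ univ.filter (· ≠ x0 j),
          (if Function.update x0 j y i = x then (1:ℤ) else 0) * (-(if s j = y then 1 else 0)) := by
    intro j
    refine Finset.sum_congr rfl fun y hy => ?_
    simp only [Finset.mem_filter, Finset.mem_univ, true_and] at hy
    exact hterm j y hy
  rw [Finset.sum_congr rfl fun j _ => hinner j]
  -- now case on x vs x0 i
  rcases eq_or_ne x (x0 i) with rfl | hx
  · -- x = x0 i
    have hAi : ∑ y ∈ univ.filter (· ≠ x0 i),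
        (if Function.update x0 i y i = x0 i then (1:ℤ) else 0) * (-(if s i = y then 1 else 0)) = 0 := by
      refine Finset.sum_eq_zero fun y hy => ?_
      simp only [Finset.mem_filter, Finset.mem_univ, true_and] at hy
      rw [Function.update_self, if_neg hy, zero_mul]
    have hAj : ∀ j : Fin k, j ≠ i → ∑ y ∈ univ.filter (· ≠ x0 j),
        (if Function.update x0 j y i = x0 i then (1:ℤ) else 0) * (-(if s j = y then 1 else 0))
        = -(if s j ≠ x0 j then (1:ℤ) else 0) := by
      intro j hj
      have hupd : ∀ y : X j, Function.update x0 j y i = x0 i :=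
        fun y => Function.update_of_ne (fun e => hj e.symm) _ _
      rw [Finset.sum_congr rfl fun y _ => by rw [hupd y, if_pos rfl, one_mul]]
      rw [Finset.sum_neg_distrib]
      congr 1
      rw [Finset.sum_ite_eq]
      simp
    -- total sum over j
    have hsum : ∑ j, ∑ y ∈ univ.filter (· ≠ x0 j),
        (if Function.update x0 j y i = x0 i then (1:ℤ) else 0) * (-(if s j = y then 1 else 0))
        = -((dd x0 s : ℤ) - (if s i ≠ x0 i then 1 else 0)) := by
      have e1 : ∑ j, (if s j ≠ x0 j then (1:ℤ) else 0) = (dd x0 s : ℤ) := by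
        rw [Finset.sum_boole]; rfl
      calc ∑ j, ∑ y ∈ univ.filter (· ≠ x0 j),
            (if Function.update x0 j y i = x0 i then (1:ℤ) else 0) * (-(if s j = y then 1 else 0))
          = ∑ j, (if j = i then 0 else -(if s j ≠ x0 j then (1:ℤ) else 0)) := by
            refine Finset.sum_congr rfl fun j _ => ?_
            rcases eq_or_ne j i with rfl | hj
            · rw [if_pos rfl]; exact hAi
            · rw [if_neg hj]; exact hAj j hj
        _ = -((dd x0 s : ℤ) - (if s i ≠ x0 i then 1 else 0)) := by
            rw [← Finset.add_sum_erase univ _ (Finset.mem_univ i), if_pos rfl, zero_add]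
            have := Finset.add_sum_erase univ (fun j => -(if s j ≠ x0 j then (1:ℤ) else 0)) (Finset.mem_univ i)
            have e2 : ∑ j ∈ univ.erase i, (if j = i then (0:ℤ) else -(if s j ≠ x0 j then 1 else 0))
                = ∑ j ∈ univ.erase i, -(if s j ≠ x0 j then (1:ℤ) else 0) := by
              refine Finset.sum_congr rfl fun j hj => ?_
              rw [if_neg (Finset.ne_of_mem_erase hj)]
            rw [e2]
            have e3 : ∑ j ∈ univ.erase i, -(if s j ≠ x0 j then (1:ℤ) else 0)
                = (∑ j, -(if s j ≠ x0 j then (1:ℤ) else 0)) + (if s i ≠ x0 i then 1 else 0) := by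
              rw [← this]; ring
            rw [e3, Finset.sum_neg_distrib, e1]; ring
    rw [hsum]
    rcases eq_or_ne (s i) (x0 i) with h | h <;> simp [h] <;> ring
  · -- x ≠ x0 i
    have hAj : ∀ j : Fin k, j ≠ i → ∑ y ∈ univ.filter (· ≠ x0 j),
        (if Function.update x0 j y i = x then (1:ℤ) else 0) * (-(if s j = y then 1 else 0)) = 0 := by
      intro j hj
      refine Finset.sum_eq_zero fun y _ => ?_
      have hupd : Function.update x0 j y i = x0 i := Function.update_of_ne (fun e => hj e.symm) _ _
      rw [hupd, if_neg (fun e => hx e.symm), zero_mul]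
    have hAi : ∑ y ∈ univ.filter (· ≠ x0 i),
        (if Function.update x0 i y i = x then (1:ℤ) else 0) * (-(if s i = y then 1 else 0))
        = -(if s i = x then 1 else 0) := by
      have e1 : ∀ y : X i, Function.update x0 i y i = y := fun y => Function.update_self _ _ _
      calc ∑ y ∈ univ.filter (· ≠ x0 i),
            (if Function.update x0 i y i = x then (1:ℤ) else 0) * (-(if s i = y then 1 else 0))
          = ∑ y ∈ univ.filter (· ≠ x0 i), (if x = y then (-(if s i = y then (1:ℤ) else 0)) else 0) := by
            refine Finset.sum_congr rfl fun y _ => ?_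
            rw [e1 y]
            rcases eq_or_ne x y with rfl | hxy
            · rw [if_pos rfl, if_pos rfl, one_mul]
            · rw [if_neg hxy, if_neg (fun e => hxy e.symm), zero_mul]
        _ = -(if s i = x then 1 else 0) := by
            rw [Finset.sum_ite_eq, if_pos (by simp [hx])]
    rw [Finset.sum_eq_single i (fun j _ hj => hAj j hj) (by simp), hAi,
      if_neg (show ¬ x0 i = x from fun e => hx e.symm)]
    ring

lemma sum_delta_apply {α : Type} [Fintype α] (g : α → ℤ) (p : α) :
    (∑ q, g q • deltaFn q) p = g p := by
  rw [Finset.sum_apply]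
  simp only [Pi.smul_apply, deltaFn, smul_eq_mul, mul_ite, mul_one, mul_zero]
  rw [Finset.sum_ite_eq]
  simp

lemma fn_decomp {α : Type} [Fintype α] (f : α → ℤ) : f = ∑ q, f q • deltaFn q := by
  funext p; rw [sum_delta_apply]

lemma delta_indep {α : Type} [Fintype α] : LinearIndependent ℤ (fun q : α => deltaFn q) := by
  rw [Fintype.linearIndependent_iff]
  intro g hg q
  have := congrFun hg q
  rwa [sum_delta_apply] at this

lemma psi_delta (i : Fin k) (x : X i) :
    Psi X (deltaFn ⟨i, x⟩) = fun t => if t i = x then (1:ℤ) else 0 := by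
  funext t
  show (∑ j, deltaFn (⟨i, x⟩ : Σ i, X i) ⟨j, t j⟩) = _
  rw [Finset.sum_eq_single i]
  · simp [deltaFn, Sigma.mk.inj_iff]
  · intro j _ hj
    simp [deltaFn, Sigma.mk.inj_iff, hj]
  · simp

noncomputable def qMap :
    ((∀ i, X i) → ℤ) →ₗ[ℤ] ({t : ∀ i, X i // 2 ≤ Nat.card {i : Fin k // t i ≠ x0 i}} → ℤ) where
  toFun f := fun s => ∑ t, f t * cMat x0 t s.1
  map_add' f g := by funext s; simp [add_mul, Finset.sum_add_distrib]
  map_smul' c f := by funext s; simp [Finset.mul_sum, mul_assoc]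

lemma two_le_dd_of_mem (s : {t : ∀ i, X i // 2 ≤ Nat.card {i : Fin k // t i ≠ x0 i}}) :
    2 ≤ dd x0 s.1 := by
  have := s.2; rwa [ncard_eq x0 s.1] at this

lemma qMap_psi_delta (p : Σ i, X i) : qMap x0 (Psi X (deltaFn p)) = 0 := by
  obtain ⟨i, x⟩ := p
  funext s
  show ∑ t, (Psi X (deltaFn ⟨i, x⟩)) t * cMat x0 t s.1 = 0
  rw [psi_delta]
  exact core x0 s.1 (two_le_dd_of_mem x0 s) i x

lemma qMap_comp_psi : (qMap x0).comp (Psi X) = 0 := by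
  refine LinearMap.ext fun f => ?_
  show qMap x0 (Psi X f) = 0
  rw [fn_decomp f, map_sum, map_sum]
  refine Finset.sum_eq_zero fun p _ => ?_
  rw [map_smul, map_smul, qMap_psi_delta, smul_zero]

lemma qMap_delta (t : ∀ i, X i) : qMap x0 (deltaFn t) = fun s => cMat x0 t s.1 := by
  funext s
  show ∑ u, deltaFn t u * cMat x0 u s.1 = _
  simp only [deltaFn, ite_mul, one_mul, zero_mul]
  rw [Finset.sum_ite_eq']
  simp

lemma rel (i : Fin k) (x : X i) :
    ∑ u, (if u i = x then (1:ℤ) else 0) •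
      (Submodule.Quotient.mk (p := LinearMap.range (Psi X)) (deltaFn u)) = 0 := by
  have h1 : ∑ u, (if u i = x then (1:ℤ) else 0) • deltaFn u = Psi X (deltaFn ⟨i, x⟩) := by
    rw [psi_delta]
    funext p
    rw [Finset.sum_apply]
    simp only [Pi.smul_apply, deltaFn, smul_eq_mul, mul_ite, mul_one, mul_zero]
    rw [Finset.sum_ite_eq]
    simp
  have h2 : ∑ u, (if u i = x then (1:ℤ) else 0) •
      (Submodule.Quotient.mk (p := LinearMap.range (Psi X)) (deltaFn u))
      = Submodule.mkQ (LinearMap.range (Psi X)) (∑ u, (if u i = x then (1:ℤ) else 0) • deltaFn u) := by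
    rw [map_sum]
    refine Finset.sum_congr rfl fun u _ => ?_
    rw [map_smul, Submodule.mkQ_apply]
  rw [h2, h1, Submodule.mkQ_apply, Submodule.Quotient.mk_eq_zero]
  exact ⟨deltaFn ⟨i, x⟩, rfl⟩

-- ===== independence =====

lemma indep : LinearIndependent ℤ
    (fun s : {t : ∀ i, X i // 2 ≤ Nat.card {i : Fin k // t i ≠ x0 i}} =>
      (Submodule.Quotient.mk (p := LinearMap.range (Psi X)) (deltaFn s.1))) := by
  set qbar := Submodule.liftQ (LinearMap.range (Psi X)) (qMap x0)
    (LinearMap.range_le_ker_iff.mpr (qMap_comp_psi x0)) with hqbar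
  apply LinearIndependent.of_comp qbar
  have he : (⇑qbar ∘ fun s : {t : ∀ i, X i // 2 ≤ Nat.card {i : Fin k // t i ≠ x0 i}} =>
      (Submodule.Quotient.mk (p := LinearMap.range (Psi X)) (deltaFn s.1)))
      = fun s => deltaFn s := by
    funext s
    show qbar (Submodule.Quotient.mk (deltaFn s.1)) = _
    rw [hqbar, Submodule.liftQ_apply, qMap_delta x0]
    funext s'
    show cMat x0 s.1 s'.1 = deltaFn s s'
    rw [cMat, if_pos (two_le_dd_of_mem x0 s)]
    simp only [deltaFn]
    rcases eq_or_ne s' s with rfl | h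
    · simp
    · rw [if_neg (fun e => h (Subtype.ext e)), if_neg h]
  rw [he]
  exact delta_indep

-- ===== spanning =====

lemma memA (t : ∀ i, X i) (h : 2 ≤ dd x0 t) :
    (Submodule.Quotient.mk (p := LinearMap.range (Psi X)) (deltaFn t)) ∈
      Submodule.span ℤ (Set.range fun s : {t : ∀ i, X i // 2 ≤ Nat.card {i : Fin k // t i ≠ x0 i}} =>
        (Submodule.Quotient.mk (p := LinearMap.range (Psi X)) (deltaFn s.1))) :=
  Submodule.subset_span ⟨⟨t, by rw [ncard_eq x0 t]; exact h⟩, rfl⟩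

lemma memB (t : ∀ i, X i) (h : dd x0 t = 1) :
    (Submodule.Quotient.mk (p := LinearMap.range (Psi X)) (deltaFn t)) ∈
      Submodule.span ℤ (Set.range fun s : {t : ∀ i, X i // 2 ≤ Nat.card {i : Fin k // t i ≠ x0 i}} =>
        (Submodule.Quotient.mk (p := LinearMap.range (Psi X)) (deltaFn s.1))) := by
  obtain ⟨i, hi⟩ := Finset.card_eq_one.mp h
  have hti : t i ≠ x0 i := by
    have : i ∈ univ.filter fun j => t j ≠ x0 j := by rw [hi]; simp
    simpa using this
  have htj : ∀ j, j ≠ i → t j = x0 j := by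
    intro j hj
    by_contra hne
    have : j ∈ univ.filter fun j' => t j' ≠ x0 j' := by simp [hne]
    rw [hi] at this
    exact hj (Finset.mem_singleton.mp this)
  have hrel := rel i (t i)
  rw [← Finset.add_sum_erase univ _ (Finset.mem_univ t), if_pos rfl, one_smul] at hrel
  rw [eq_neg_of_add_eq_zero_left hrel]
  refine Submodule.neg_mem _ (Submodule.sum_mem _ fun u hu => ?_)
  rcases eq_or_ne (u i) (t i) with hc | hc
  · rw [if_pos hc, one_smul]
    have hut : u ≠ t := Finset.ne_of_mem_erase hu
    obtain ⟨j, hj⟩ := Function.ne_iff.mp hut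
    have hji : j ≠ i := fun e => hj (by rw [e, hc])
    have huj : u j ≠ x0 j := by rw [← htj j hji]; exact hj
    have hui : u i ≠ x0 i := by rw [hc]; exact hti
    exact memA x0 u (two_le_dd x0 (fun e => hji e.symm) hui huj)
  · rw [if_neg hc, zero_smul]
    exact Submodule.zero_mem _

lemma memAll [NeZero k] (t : ∀ i, X i) :
    (Submodule.Quotient.mk (p := LinearMap.range (Psi X)) (deltaFn t)) ∈
      Submodule.span ℤ (Set.range fun s : {t : ∀ i, X i // 2 ≤ Nat.card {i : Fin k // t i ≠ x0 i}} =>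
        (Submodule.Quotient.mk (p := LinearMap.range (Psi X)) (deltaFn s.1))) := by
  rcases le_or_gt 2 (dd x0 t) with h | h
  · exact memA x0 t h
  rcases (by omega : dd x0 t = 0 ∨ dd x0 t = 1) with h0 | h1
  · -- t = x0
    have ht : t = x0 := (dd_eq_zero_iff x0 t).mp h0
    have i0 : Fin k := ⟨0, Nat.pos_of_ne_zero (NeZero.ne k)⟩
    have hrel := rel i0 (t i0)
    rw [← Finset.add_sum_erase univ _ (Finset.mem_univ t), if_pos rfl, one_smul] at hrel
    rw [eq_neg_of_add_eq_zero_left hrel]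
    refine Submodule.neg_mem _ (Submodule.sum_mem _ fun u hu => ?_)
    rcases eq_or_ne (u i0) (t i0) with hc | hc
    · rw [if_pos hc, one_smul]
      have hut : u ≠ t := Finset.ne_of_mem_erase hu
      have hd0 : dd x0 u ≠ 0 := fun e => hut (((dd_eq_zero_iff x0 u).mp e).trans ht.symm)
      rcases le_or_gt 2 (dd x0 u) with h2 | h2
      · exact memA x0 u h2
      · exact memB x0 u (by omega)
    · rw [if_neg hc, zero_smul]
      exact Submodule.zero_mem _
  · exact memB x0 t h1

lemma span_top [NeZero k] :
    ⊤ ≤ Submodule.span ℤ (Set.range fun s : {t : ∀ i, X i // 2 ≤ Nat.card {i : Fin k // t i ≠ x0 i}} =>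
        (Submodule.Quotient.mk (p := LinearMap.range (Psi X)) (deltaFn s.1))) := by
  intro z _
  obtain ⟨f, rfl⟩ := Submodule.Quotient.mk_surjective _ z
  have : (Submodule.Quotient.mk (p := LinearMap.range (Psi X)) f)
      = ∑ t, f t • (Submodule.Quotient.mk (p := LinearMap.range (Psi X)) (deltaFn t)) := by
    conv_lhs => rw [fn_decomp f]
    rw [← Submodule.mkQ_apply, map_sum]
    exact Finset.sum_congr rfl fun t _ => by rw [map_smul, Submodule.mkQ_apply]
  rw [this]
  exact Submodule.sum_mem _ fun t _ => Submodule.smul_mem _ _ (memAll x0 t)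

lemma card_dd_one : (univ.filter fun t : ∀ i, X i => dd x0 t = 1).card
    = ∑ j, (Fintype.card (X j) - 1) := by
  have h := dd_one_reindex (M := ℕ) x0 (fun _ => 1)
  simp only [Finset.sum_const, smul_eq_mul, mul_one] at h
  rw [h]
  refine Finset.sum_congr rfl fun j _ => ?_
  rw [Finset.filter_ne', Finset.card_erase_of_mem (Finset.mem_univ _), Finset.card_univ]

lemma filter_not_two_le : (univ.filter fun t : ∀ i, X i => ¬ 2 ≤ dd x0 t)
    = (univ.filter fun t => dd x0 t = 1) ∪ {x0} := by
  ext t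
  simp only [Finset.mem_filter, Finset.mem_univ, true_and, Finset.mem_union,
    Finset.mem_singleton, ← dd_eq_zero_iff x0 t]
  omega

lemma card_S_eq : (univ.filter fun t : ∀ i, X i => 2 ≤ dd x0 t).card
    + ((∑ j, (Fintype.card (X j) - 1)) + 1) = ∏ i, Fintype.card (X i) := by
  have hdisj : Disjoint (univ.filter fun t : ∀ i, X i => dd x0 t = 1) ({x0} : Finset _) := by
    simp only [Finset.disjoint_singleton_right, Finset.mem_filter]
    have : dd x0 x0 = 0 := (dd_eq_zero_iff x0 x0).mpr rfl
    omega
  have h := Finset.card_filter_add_card_filter_not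
    (s := (univ : Finset (∀ i, X i))) (fun t => 2 ≤ dd x0 t)
  rw [filter_not_two_le x0, Finset.card_union_of_disjoint hdisj, Finset.card_singleton,
    card_dd_one x0, Finset.card_univ, Fintype.card_pi] at h
  exact h

lemma card_S_int [NeZero k] [∀ i, Nonempty (X i)] :
    (Nat.card {t : ∀ i, X i // 2 ≤ Nat.card {i : Fin k // t i ≠ x0 i}} : ℤ) =
      (∏ i, (Fintype.card (X i) : ℤ)) - (∑ i, (Fintype.card (X i) : ℤ)) + k - 1 := by
  have hS : Nat.card {t : ∀ i, X i // 2 ≤ Nat.card {i : Fin k // t i ≠ x0 i}}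
      = (univ.filter fun t => 2 ≤ dd x0 t).card := by
    rw [Nat.card_eq_fintype_card, Fintype.card_subtype]
    congr 1
    apply Finset.filter_congr
    intro t _
    rw [ncard_eq x0 t]
  have h1 : ((∑ j, (Fintype.card (X j) - 1) : ℕ) : ℤ)
      = (∑ j, (Fintype.card (X j) : ℤ)) - k := by
    rw [Nat.cast_sum]
    rw [Finset.sum_congr rfl (fun j _ => Nat.cast_sub (Fintype.card_pos (α := X j)))]
    rw [Finset.sum_sub_distrib, Finset.sum_const, Finset.card_univ, Fintype.card_fin]
    push_cast
    ring
  have h2 := card_S_eq x0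
  have h3 := congrArg (fun n : ℕ => (n : ℤ)) h2
  push_cast at h3
  rw [hS]
  push_cast
  rw [← Nat.cast_sum] at h3
  rw [h1] at h3
  linarith

end Aux

/-- The cokernel `ℤ^(X₁×⋯×X_k)/Ψ(ℤ^(X₁⊔⋯⊔X_k))` is a free abelian group of rank
`|X₁|⋯|X_k| − |X₁| − ⋯ − |X_k| + k − 1`, freely generated by the images of the
basis elements `δ_t` such that `tᵢ ≠ xᵢ⁰` for at least two distinct indices. -/
theorem stmt1 {k : ℕ} [NeZero k] (X : Fin k → Type) [∀ i, Fintype (X i)]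
    [∀ i, Nonempty (X i)] (x0 : ∀ i, X i) :
    (∃ b : Module.Basis {t : ∀ i, X i // 2 ≤ Nat.card {i : Fin k // t i ≠ x0 i}} ℤ
        (((∀ i, X i) → ℤ) ⧸ LinearMap.range (Psi X)),
      ∀ t, b t = Submodule.Quotient.mk (deltaFn t.1)) ∧
    (Nat.card {t : ∀ i, X i // 2 ≤ Nat.card {i : Fin k // t i ≠ x0 i}} : ℤ) =
      (∏ i, (Fintype.card (X i) : ℤ)) - (∑ i, (Fintype.card (X i) : ℤ)) + k - 1 := by
  refine ⟨⟨Module.Basis.mk (indep x0) (span_top x0), fun t => Module.Basis.mk_apply _ _ t⟩, card_S_int x0⟩
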